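/- Let a ≤ b be integers. There exists an integer l ≥ 0 depending only on b−a such that: for every commutative ring R, every π ∈ R, every π-exact cochain complex M^• of R-modules with M^i = 0 for all i ∉ [a,b], and every bounded-above cochain complex F^• of flat R-modules, the total complex of the double complex M^• ⊗_R F^• is π^l-exact. (Since F^• can be any bounded-above flat complex representing a complex N^•, this says exactly that the derived tensor product M^• ⊗_R^L N^• is π^l-exact for every complex N^•.) -/

import Mathlib

open CategoryTheory

section PseudoCoherence

variable {R : Type*} [CommRing R]

/-- A linear map (in `ModuleCat R`) is a `π`-isomorphism if its kernel and cokernel are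
annihilated by `π`. -/
def IsPiIsomorphism (π : R) {M N : ModuleCat R} (f : M ⟶ N) : Prop :=
  (∀ x : M, f x = 0 → π • x = 0) ∧ (∀ y : N, ∃ x : M, π • y = f x)

/-- A linear map (in `ModuleCat R`) is `π`-surjective if its cokernel is annihilated by `π`. -/
def IsPiSurjective (π : R) {M N : ModuleCat R} (f : M ⟶ N) : Prop :=
  ∀ y : N, ∃ x : M, π • y = f x

/-- A morphism of cochain complexes of `R`-modules `f : P^• ⟶ M^•` is a `π`-`[a,b]`-pseudo
resolution if `P^•` is a complex of finite free `R`-modules vanishing outside `[a,b]`, and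
`H^i(f)` is a `π`-isomorphism for `i > a` and `π`-surjective for `i = a`. -/
def IsPiPseudoResolution (π : R) (a b : ℤ) {P M : CochainComplex (ModuleCat R) ℤ}
    (f : P ⟶ M) : Prop :=
  (∀ i : ℤ, Module.Free R (P.X i)) ∧ (∀ i : ℤ, Module.Finite R (P.X i)) ∧
  (∀ i : ℤ, i < a ∨ b < i → ∀ x : P.X i, x = 0) ∧
  (∀ i : ℤ, a < i → IsPiIsomorphism π (HomologicalComplex.homologyMap f i)) ∧
  IsPiSurjective π (HomologicalComplex.homologyMap f a)

/-- A cochain complex of `R`-modules is `π`-`[a,b]`-pseudo-coherent if it vanishes in degrees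
`> b` and admits a `π`-`[a,b]`-pseudo resolution. -/
def IsPiPseudoCoherent (π : R) (a b : ℤ) (M : CochainComplex (ModuleCat R) ℤ) : Prop :=
  (∀ i : ℤ, b < i → ∀ x : M.X i, x = 0) ∧
  ∃ (P : CochainComplex (ModuleCat R) ℤ) (f : P ⟶ M), IsPiPseudoResolution π a b f

end PseudoCoherence

open MonoidalCategory in
instance curriedTensor_additive {C : Type*} [Category C] [MonoidalCategory C] [Preadditive C]
    [MonoidalPreadditive C] : (curriedTensor C).Additive where
  map_add := by
    intros
    ext
    apply MonoidalPreadditive.add_whiskerRight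

open MonoidalCategory in
instance curriedTensor_obj_additive {C : Type*} [Category C] [MonoidalCategory C]
    [Preadditive C] [MonoidalPreadditive C] (X : C) :
    ((curriedTensor C).obj X).Additive where
  map_add := by
    intros
    apply MonoidalPreadditive.whiskerLeft_add

universe u

section Auxiliary

open CategoryTheory Limits MonoidalCategory HomologicalComplex

section Algebra
variable {R : Type u} [CommRing R]

lemma tensor_triv_left {A B : Type u} [AddCommGroup A] [AddCommGroup B] [Module R A]
    [Module R B] (hA : ∀ t : A, t = 0) (x : TensorProduct R A B) : x = 0 := by
  refine TensorProduct.induction_on x rfl (fun m n => ?_) (fun s t hs ht => ?_)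
  · rw [hA m, TensorProduct.zero_tmul]
  · rw [hs, ht, add_zero]
/-- If `π` annihilates `A`, then `π` annihilates `A ⊗ B`. -/
lemma tensor_pi_null_left {A B : Type u} [AddCommGroup A] [AddCommGroup B] [Module R A]
    [Module R B] (π : R) (hA : ∀ t : A, π • t = 0) (x : TensorProduct R A B) : π • x = 0 := by
  refine TensorProduct.induction_on x (smul_zero _) (fun m n => ?_) (fun s t hs ht => ?_)
  · rw [TensorProduct.smul_tmul', hA m, TensorProduct.zero_tmul]
  · rw [smul_add, hs, ht, add_zero]

/-- Key flatness lemma: if `A → B → C` is a complex whose homology at `B` is annihilated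
by `π`, and `Q` is flat, then for `t : B ⊗ Q` with `(g ⊗ 1) t = 0` we have
`π • t ∈ range (f ⊗ 1)`. -/
lemma flat_pi_chase {A B C Q : Type u} [AddCommGroup A] [AddCommGroup B] [AddCommGroup C]
    [AddCommGroup Q] [Module R A] [Module R B] [Module R C] [Module R Q] [Module.Flat R Q]
    (π : R) (f : A →ₗ[R] B) (g : B →ₗ[R] C) (hfg : ∀ a, g (f a) = 0)
    (hπ : ∀ x : B, g x = 0 → ∃ y, f y = π • x)
    (t : TensorProduct R B Q) (ht : LinearMap.rTensor Q g t = 0) :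
    ∃ s : TensorProduct R A Q, LinearMap.rTensor Q f s = π • t := by
  set K := LinearMap.ker g
  set ι : K →ₗ[R] B := K.subtype
  set f' : A →ₗ[R] K := f.codRestrict K (fun a => hfg a)
  have hcomp : ι ∘ₗ f' = f := LinearMap.subtype_comp_codRestrict f K _
  -- flatness: ker (g ⊗ 1) = range (ι ⊗ 1)
  have hexact1 : Function.Exact (LinearMap.rTensor Q ι) (LinearMap.rTensor Q g) :=
    Module.Flat.rTensor_exact Q (LinearMap.exact_subtype_ker_map g)
  obtain ⟨u, hu⟩ := (hexact1 t).mp ht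
  -- right exactness for the quotient by the image of f'
  set H := K ⧸ LinearMap.range f'
  set mkQ : K →ₗ[R] H := (LinearMap.range f').mkQ
  have hexact2 : Function.Exact (LinearMap.rTensor Q f') (LinearMap.rTensor Q mkQ) :=
    rTensor_exact Q (f'.exact_map_mkQ_range) (Submodule.mkQ_surjective _)
  have hH : ∀ h : H, π • h = 0 := by
    intro h
    obtain ⟨z, rfl⟩ := Submodule.mkQ_surjective _ h
    rw [← map_smul]
    rw [Submodule.mkQ_apply, Submodule.Quotient.mk_eq_zero]
    obtain ⟨y, hy⟩ := hπ z.1 z.2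
    exact ⟨y, Subtype.ext hy⟩
  have h0 : LinearMap.rTensor Q mkQ (π • u) = 0 := by
    rw [map_smul]
    exact tensor_pi_null_left π hH _
  obtain ⟨s, hs⟩ := (hexact2 (π • u)).mp h0
  refine ⟨s, ?_⟩
  rw [← hcomp, LinearMap.rTensor_comp, LinearMap.comp_apply, hs, map_smul, hu]


end Algebra

section Total
variable {R : Type u} [CommRing R] (M F : CochainComplex (ModuleCat.{u} R) ℤ)

/-- The inclusion of the `(p,q)` summand in the total tensor complex. -/
noncomputable def ιT (p q n : ℤ) (h : p + q = n) :
    ((curriedTensor (ModuleCat.{u} R)).obj (M.X p)).obj (F.X q) ⟶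
      (HomologicalComplex.tensorObj M F).X n :=
  ιMapBifunctor M F (curriedTensor (ModuleCat.{u} R)) (ComplexShape.up ℤ) p q n h

/-- The projection onto the `(r,s)` summand of the total tensor complex. -/
noncomputable def projT (n r s : ℤ) (hrs : r + s = n) :
    (HomologicalComplex.tensorObj M F).X n ⟶
      ((curriedTensor (ModuleCat.{u} R)).obj (M.X r)).obj (F.X s) :=
  mapBifunctorDesc (fun p q h => if hp : p = r then
    eqToHom (by subst hp; obtain rfl : q = s := (by have h' : p + q = n := h; omega); rfl) else 0)

lemma ι_projT_self (n r s : ℤ) (hrs : r + s = n) :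
    ιT M F r s n hrs ≫ projT M F n r s hrs = 𝟙 _ := by
  rw [ιT, projT, ι_mapBifunctorDesc, dif_pos rfl]
  simp

lemma ι_projT_ne (p q n r s : ℤ) (h : p + q = n) (hrs : r + s = n) (hpr : p ≠ r) :
    ιT M F p q n h ≫ projT M F n r s hrs = 0 := by
  rw [ιT, projT, ι_mapBifunctorDesc, dif_neg hpr]

/-- The submodule of the total complex in degree `n` spanned by the summands with
first index `≤ p`. -/
noncomputable def SS (n p : ℤ) : Submodule R ((HomologicalComplex.tensorObj M F).X n) :=
  ⨆ (p' : ℤ) (_ : p' ≤ p) (q : ℤ) (h : p' + q = n), LinearMap.range (ιT M F p' q n h).hom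

lemma mem_SS_of {p p' q n : ℤ} (h : p' + q = n) (hp : p' ≤ p)
    (t : ((curriedTensor (ModuleCat.{u} R)).obj (M.X p')).obj (F.X q)) :
    ιT M F p' q n h t ∈ SS M F n p := by
  have hle : LinearMap.range (ιT M F p' q n h).hom ≤ SS M F n p :=
    le_iSup_of_le p' (le_iSup_of_le hp (le_iSup_of_le q (le_iSup_of_le h le_rfl)))
  exact hle ⟨t, rfl⟩

lemma SS_mono {n p p'' : ℤ} (hpp : p ≤ p'') : SS M F n p ≤ SS M F n p'' := by
  refine iSup_le fun p' => iSup_le fun hp' => iSup_le fun q => iSup_le fun h => ?_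
  exact le_iSup_of_le p' (le_iSup_of_le (le_trans hp' hpp)
    (le_iSup_of_le q (le_iSup_of_le h le_rfl)))

lemma SS_mem_split {n p : ℤ} {x : (HomologicalComplex.tensorObj M F).X n}
    (hx : x ∈ SS M F n p) :
    ∃ (t : ((curriedTensor (ModuleCat.{u} R)).obj (M.X p)).obj (F.X (n - p)))
      (x' : (HomologicalComplex.tensorObj M F).X n), x' ∈ SS M F n (p - 1) ∧
        x = ιT M F p (n - p) n (by omega) t + x' := by
  have hle : SS M F n p ≤
      LinearMap.range (ιT M F p (n - p) n (by omega)).hom ⊔ SS M F n (p - 1) := by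
    refine iSup_le fun p' => iSup_le fun hp' => iSup_le fun q => iSup_le fun h => ?_
    rcases eq_or_ne p' p with rfl | hne
    · obtain rfl : q = n - p' := by omega
      exact le_sup_left
    · exact le_sup_of_le_right (le_iSup_of_le p' (le_iSup_of_le (by omega)
        (le_iSup_of_le q (le_iSup_of_le h le_rfl))))
  obtain ⟨y, hy, x', hx', rfl⟩ := Submodule.mem_sup.mp (hle hx)
  obtain ⟨t, rfl⟩ := hy
  exact ⟨t, x', hx', rfl⟩

lemma SS_triv {a n p : ℤ} {x : (HomologicalComplex.tensorObj M F).X n}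
    (htriv : ∀ i : ℤ, i < a → ∀ x : M.X i, x = 0) (hp : p < a) (hx : x ∈ SS M F n p) :
    x = 0 := by
  have hle : SS M F n p ≤ ⊥ := by
    refine iSup_le fun p' => iSup_le fun hp' => iSup_le fun q => iSup_le fun h => ?_
    rintro _ ⟨t, rfl⟩
    have ht : t = 0 := tensor_triv_left (htriv p' (by omega)) t
    rw [ht, map_zero]
    exact Submodule.zero_mem ⊥
  simpa using hle hx

lemma SS_top {b n : ℤ} (htriv : ∀ i : ℤ, b < i → ∀ x : M.X i, x = 0)
    (x : (HomologicalComplex.tensorObj M F).X n) : x ∈ SS M F n b := by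
  set Smod := SS M F n b with hSmod
  let qmap : (HomologicalComplex.tensorObj M F).X n ⟶
      ModuleCat.of R (((HomologicalComplex.tensorObj M F).X n : Type u) ⧸ Smod) :=
    ModuleCat.ofHom Smod.mkQ
  have h0 : qmap = 0 := by
    apply mapBifunctor.hom_ext
    intro p q h
    rw [Limits.comp_zero]
    apply ModuleCat.hom_ext
    apply LinearMap.ext
    intro t
    rcases le_or_gt p b with hpb | hpb
    · show Smod.mkQ (ιT M F p q n h t) = 0
      rw [Submodule.mkQ_apply, Submodule.Quotient.mk_eq_zero]
      exact mem_SS_of M F h hpb t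
    · have ht : t = 0 := tensor_triv_left (htriv p hpb) t
      show Smod.mkQ (ιT M F p q n h t) = 0
      rw [ht, map_zero, map_zero]
  have := ConcreteCategory.congr_hom h0 x
  have hx0 : Smod.mkQ x = 0 := this
  rwa [Submodule.mkQ_apply, Submodule.Quotient.mk_eq_zero] at hx0


lemma ιT_d (p q n p' q' m : ℤ) (h : p + q = n) (hp' : p + 1 = p') (hq' : q + 1 = q')
    (hm : n + 1 = m) :
    ιT M F p q n h ≫ (HomologicalComplex.tensorObj M F).d n m =
      ((M.d p p') ▷ (F.X q)) ≫ ιT M F p' q m (by omega) +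
        (ComplexShape.up ℤ).ε p •
          (((M.X p) ◁ (F.d q q')) ≫ ιT M F p q' m (by omega)) := by
  rw [ιT, mapBifunctor.d_eq, Preadditive.comp_add, mapBifunctor.ι_D₁, mapBifunctor.ι_D₂,
    mapBifunctor.d₁_eq M F (curriedTensor (ModuleCat.{u} R)) (ComplexShape.up ℤ)
      (show (ComplexShape.up ℤ).Rel p p' from hp') q m (by show p' + q = m; omega),
    mapBifunctor.d₂_eq M F (curriedTensor (ModuleCat.{u} R)) (ComplexShape.up ℤ) p
      (show (ComplexShape.up ℤ).Rel q q' from hq') m (by show p + q' = m; omega)]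
  rw [show ComplexShape.ε₁ (ComplexShape.up ℤ) (ComplexShape.up ℤ) (ComplexShape.up ℤ) (p, q)
      = 1 from rfl, one_smul]
  rfl

lemma d_ιT_apply (p q n p' q' m : ℤ) (h : p + q = n) (hp' : p + 1 = p') (hq' : q + 1 = q')
    (hm : n + 1 = m)
    (t : ((curriedTensor (ModuleCat.{u} R)).obj (M.X p)).obj (F.X q)) :
    (HomologicalComplex.tensorObj M F).d n m (ιT M F p q n h t) =
      ιT M F p' q m (by omega) (((M.d p p') ▷ (F.X q)) t) +
        (ComplexShape.up ℤ).ε p •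
          ιT M F p q' m (by omega) (((M.X p) ◁ (F.d q q')) t) := by
  have := ConcreteCategory.congr_hom (ιT_d M F p q n p' q' m h hp' hq' hm) t
  simpa using this

lemma d_SS {n m p : ℤ} (hm : n + 1 = m) {x : (HomologicalComplex.tensorObj M F).X n}
    (hx : x ∈ SS M F n p) :
    (HomologicalComplex.tensorObj M F).d n m x ∈ SS M F m (p + 1) := by
  have hle : SS M F n p ≤ Submodule.comap
      ((HomologicalComplex.tensorObj M F).d n m).hom (SS M F m (p + 1)) := by
    refine iSup_le fun p' => iSup_le fun hp' => iSup_le fun q => iSup_le fun h => ?_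
    rintro _ ⟨t, rfl⟩
    simp only [Submodule.mem_comap]
    rw [d_ιT_apply M F p' q n (p' + 1) (q + 1) m h rfl rfl hm]
    refine Submodule.add_mem _ (mem_SS_of M F (by omega) (by omega) _) ?_
    rw [Units.smul_def, ← map_zsmul]
    exact mem_SS_of M F (by omega) (by omega) _
  exact hle hx

lemma projT_SS {n p r s : ℤ} (hrs : r + s = n) {x : (HomologicalComplex.tensorObj M F).X n}
    (hx : x ∈ SS M F n p) (hpr : p < r) : projT M F n r s hrs x = 0 := by
  have hle : SS M F n p ≤ LinearMap.ker (projT M F n r s hrs).hom := by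
    refine iSup_le fun p' => iSup_le fun hp' => iSup_le fun q => iSup_le fun h => ?_
    rintro _ ⟨t, rfl⟩
    have := ConcreteCategory.congr_hom (ι_projT_ne M F p' q n r s h hrs (by omega)) t
    simpa using this
  simpa using hle hx

end Total

section HomologyElt
variable {R : Type u} [CommRing R]

/-- `c`-nullity of homology of a cochain complex of modules, elementwise. -/
lemma pi_null_homology_iff (K : CochainComplex (ModuleCat.{u} R) ℤ) (cst : R) (i j k : ℤ)
    (hij : i + 1 = j) (hjk : j + 1 = k) :
    (∀ x : K.homology j, cst • x = 0) ↔
      (∀ x : K.X j, K.d j k x = 0 → ∃ y : K.X i, K.d i j y = cst • x) := by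
  have hprev : (ComplexShape.up ℤ).prev j = i := by
    rw [CochainComplex.prev]; omega
  have hnext : (ComplexShape.up ℤ).next j = k := by
    rw [CochainComplex.next]; omega
  rw [← hprev, ← hnext]
  set S := K.sc j with hS
  have e : S.homology ≅ S.moduleCatLeftHomologyData.H := S.moduleCatHomologyIso
  let el := (CategoryTheory.Iso.toLinearEquiv e)
  have einj : Function.Injective e.hom := el.injective
  have key : (∀ x : S.homology, cst • x = 0) ↔ (∀ x : S.moduleCatLeftHomologyData.H, cst • x = 0) := by
    constructor
    · intro h x
      obtain ⟨x', hx'⟩ := el.surjective x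
      rw [← hx', ← map_smul, h, map_zero]
    · intro h x
      apply einj
      rw [map_smul, h, map_zero]
  have key2 : (∀ x : S.moduleCatLeftHomologyData.H, cst • x = 0) ↔
      (∀ x : S.X₂, S.g x = 0 → ∃ y : S.X₁, S.f y = cst • x) := by
    constructor
    · intro h x hx
      have := h (Submodule.Quotient.mk (⟨x, hx⟩ : LinearMap.ker S.g.hom))
      change (Submodule.Quotient.mk (cst • (⟨x, hx⟩ : LinearMap.ker S.g.hom)) : LinearMap.ker S.g.hom ⧸ LinearMap.range S.moduleCatToCycles) = 0 at this
      rw [Submodule.Quotient.mk_eq_zero] at this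
      obtain ⟨y, hy⟩ := this
      exact ⟨y, congrArg Subtype.val hy⟩
    · intro h x
      obtain ⟨z, rfl⟩ := Submodule.Quotient.mk_surjective _ x
      change (Submodule.Quotient.mk (cst • z) : LinearMap.ker S.g.hom ⧸ LinearMap.range S.moduleCatToCycles) = 0
      rw [Submodule.Quotient.mk_eq_zero]
      obtain ⟨y, hy⟩ := h z.1 z.2
      exact ⟨y, Subtype.ext hy⟩
  exact (key.trans key2)

end HomologyElt

section Chase
variable {R : Type u} [CommRing R] (M F : CochainComplex (ModuleCat.{u} R) ℤ)

set_option maxHeartbeats 1000000 in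
lemma chase (a : ℤ) (π : R)
    (htriv : ∀ i : ℤ, i < a → ∀ x : M.X i, x = 0)
    (hM : ∀ p : ℤ, ∀ x : M.X p, M.d p (p + 1) x = 0 →
      ∃ y : M.X (p - 1), M.d (p - 1) p y = π • x)
    (hF : ∀ i : ℤ, Module.Flat R (F.X i)) :
    ∀ (k : ℕ) (p n : ℤ), p < a + k → ∀ x : (HomologicalComplex.tensorObj M F).X n,
      (HomologicalComplex.tensorObj M F).d n (n + 1) x = 0 → x ∈ SS M F n p →
        ∃ y : (HomologicalComplex.tensorObj M F).X (n - 1),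
          (HomologicalComplex.tensorObj M F).d (n - 1) n y = π ^ k • x := by
  intro k
  induction k with
  | zero =>
    intro p n hp x hx hmem
    have hp' : p < a := by push_cast at hp; omega
    have hx0 : x = 0 := SS_triv M F htriv hp' hmem
    exact ⟨0, by rw [map_zero, hx0, pow_zero, one_smul]⟩
  | succ k ih =>
    intro p n hp x hx hmem
    obtain ⟨t, x', hx', rfl⟩ := SS_mem_split M F hmem
    -- step 1 : the `M`-differential kills `t`
    have h1 : ((M.d p (p + 1)) ▷ (F.X (n - p))) t = 0 := by
      have hproj := congrArg (projT M F (n + 1) (p + 1) (n - p) (by omega)) hx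
      rw [map_zero, map_add, map_add] at hproj
      have hmem2 : (HomologicalComplex.tensorObj M F).d n (n + 1) x' ∈ SS M F (n + 1) p := by
        have h5 := d_SS M F rfl hx'
        exact SS_mono M F (show p - 1 + 1 ≤ p by omega) h5
      have hz2 : projT M F (n + 1) (p + 1) (n - p) (by omega)
          ((HomologicalComplex.tensorObj M F).d n (n + 1) x') = 0 :=
        projT_SS M F _ hmem2 (by omega)
      rw [hz2, add_zero] at hproj
      rw [d_ιT_apply M F p (n - p) n (p + 1) (n - p + 1) (n + 1) (by omega) rfl rfl rfl,
        map_add] at hproj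
      have e1 : projT M F (n + 1) (p + 1) (n - p) (by omega)
          (ιT M F (p + 1) (n - p) (n + 1) (by omega) (((M.d p (p + 1)) ▷ (F.X (n - p))) t)) =
          ((M.d p (p + 1)) ▷ (F.X (n - p))) t := by
        have := ConcreteCategory.congr_hom (ι_projT_self M F (n + 1) (p + 1) (n - p) (by omega))
          (((M.d p (p + 1)) ▷ (F.X (n - p))) t)
        simpa using this
      have e2 : projT M F (n + 1) (p + 1) (n - p) (by omega)
          (ιT M F p (n - p + 1) (n + 1) (by omega)
            (((M.X p) ◁ (F.d (n - p) (n - p + 1))) t)) = 0 := by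
        have := ConcreteCategory.congr_hom (ι_projT_ne M F p (n - p + 1) (n + 1) (p + 1) (n - p)
          (by omega) (by omega) (by omega)) (((M.X p) ◁ (F.d (n - p) (n - p + 1))) t)
        simpa using this
      rw [e1, Units.smul_def, map_zsmul, e2, smul_zero, add_zero] at hproj
      exact hproj
    -- step 2 : use flatness and `π`-exactness of `M` to divide by the differential
    haveI : Module.Flat R (F.X (n - p)) := hF (n - p)
    have hcomp : ∀ z : M.X (p - 1), M.d p (p + 1) (M.d (p - 1) p z) = 0 := fun z => by
      have h0 : (M.d (p - 1) p ≫ M.d p (p + 1)) z = (0 : M.X (p - 1) ⟶ M.X (p + 1)) z :=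
        ConcreteCategory.congr_hom (M.d_comp_d (p - 1) p (p + 1)) z
      exact h0
    obtain ⟨s, hs⟩ := flat_pi_chase π
      (M.d (p - 1) p).hom
      (M.d p (p + 1)).hom hcomp (hM p) t h1
    -- step 3 : correct by the boundary of `s`
    set w := ιT M F (p - 1) (n - p) (n - 1) (by omega) s with hw
    have h3 := d_ιT_apply M F (p - 1) (n - p) (n - 1) p (n - p + 1) n
      (by omega) (by omega) rfl (by omega) s
    have h4 : (HomologicalComplex.tensorObj M F).d (n - 1) n w =
        ιT M F p (n - p) n (by omega) (π • t) +
        (ComplexShape.up ℤ).ε (p - 1) • ιT M F (p - 1) (n - p + 1) n (by omega)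
          (((M.X (p - 1)) ◁ (F.d (n - p) (n - p + 1))) s) := by
      rw [hw, h3]
      congr 1
      exact congrArg _ hs
    set z := π • (ιT M F p (n - p) n (by omega) t + x') -
      (HomologicalComplex.tensorObj M F).d (n - 1) n w with hz
    have hzmem : z ∈ SS M F n (p - 1) := by
      have hzeq : z = π • x' - ((ComplexShape.up ℤ).ε (p - 1) : ℤˣ) •
          ιT M F (p - 1) (n - p + 1) n (by omega)
            (((M.X (p - 1)) ◁ (F.d (n - p) (n - p + 1))) s) := by
        rw [hz, h4, smul_add, map_smul]
        abel_nf
      rw [hzeq]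
      refine Submodule.sub_mem _ (Submodule.smul_mem _ _ hx') ?_
      rw [Units.smul_def, ← map_zsmul]
      exact mem_SS_of M F (by omega) (by omega) _
    have hzd : (HomologicalComplex.tensorObj M F).d n (n + 1) z = 0 := by
      rw [hz, map_sub, map_smul, hx, smul_zero, zero_sub, neg_eq_zero]
      have h0 : ((HomologicalComplex.tensorObj M F).d (n - 1) n ≫
          (HomologicalComplex.tensorObj M F).d n (n + 1)) w =
          (0 : (HomologicalComplex.tensorObj M F).X (n - 1) ⟶
            (HomologicalComplex.tensorObj M F).X (n + 1)) w :=
        ConcreteCategory.congr_hom ((HomologicalComplex.tensorObj M F).d_comp_d (n - 1) n (n + 1)) w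
      exact h0
    obtain ⟨y, hy⟩ := ih (p - 1) n (by push_cast at hp ⊢; omega) z hzd hzmem
    refine ⟨y + π ^ k • w, ?_⟩
    rw [map_add, hy, map_smul]
    rw [hz, smul_sub, sub_add_cancel, ← mul_smul, ← pow_succ]

end Chase

end Auxiliary

/-- **Lemma 4.9.** There is an integer `l ≥ 0` depending only on `b - a` such that: for every
commutative ring `R`, every `π ∈ R`, every `π`-exact cochain complex `M^•` of `R`-modules
vanishing outside `[a,b]`, and every bounded-above cochain complex `F^•` of flat
`R`-modules, the total complex of the double complex `M^• ⊗_R F^•` (which computes the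
derived tensor product `M^• ⊗_R^L N^•` for any complex `N^•` represented by such an `F^•`)
is `π^l`-exact. -/
theorem tensor_pi_exact :
    ∃ l : ℤ → ℕ, ∀ (a b : ℤ), a ≤ b →
      ∀ (R : Type u) [CommRing R] (π : R) (M F : CochainComplex (ModuleCat R) ℤ),
        (∀ i : ℤ, i < a ∨ b < i → ∀ x : M.X i, x = 0) →
        (∀ n : ℤ, ∀ x : M.homology n, π • x = 0) →
        (∀ i : ℤ, Module.Flat R (F.X i)) →
        (∃ b' : ℤ, ∀ i : ℤ, b' < i → ∀ x : F.X i, x = 0) →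
        ∀ n : ℤ, ∀ x : (HomologicalComplex.tensorObj M F).homology n,
          π ^ l (b - a) • x = 0 := by
  refine ⟨fun d => (d + 1).toNat, ?_⟩
  intro a b hab R _ π M F hsupp hhom hflat _hFbd n
  rw [pi_null_homology_iff (HomologicalComplex.tensorObj M F) (π ^ (b - a + 1).toNat)
    (n - 1) n (n + 1) (by omega) rfl]
  intro x hx
  have hMd : ∀ p : ℤ, ∀ xm : M.X p, M.d p (p + 1) xm = 0 →
      ∃ y : M.X (p - 1), M.d (p - 1) p y = π • xm := fun p =>
    (pi_null_homology_iff M π (p - 1) p (p + 1) (by omega) rfl).mp (hhom p)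
  have htriv : ∀ i : ℤ, i < a → ∀ xm : M.X i, xm = 0 := fun i hi => hsupp i (Or.inl hi)
  have htop : x ∈ SS M F n b := SS_top M F (fun i hi => hsupp i (Or.inr hi)) x
  exact chase M F a π htriv hMd hflat (b - a + 1).toNat b n (by omega) x hx htop
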